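/- Let d be an even integer with d ≥ 2. For any integers a₁, a₂, a₃, b₁, b₂, b₃, c₁, c₂, c₃, d₁, d₂, d₃, at most twelve of the following sixteen congruences hold simultaneously (all mod d): a₁+a₂+a₃ ≡ 0, c₁+a₂+c₃+1 ≡ 0, c₁+c₂+a₃+1 ≡ 0, a₁+c₂+c₃+1 ≡ 0, d₁+a₂+b₃+1 ≡ 0, d₁+c₂+d₃+2 ≡ 0, b₁+c₂+b₃+1 ≡ 0, b₁+a₂+d₃+1 ≡ 0, d₁+d₂+c₃+2 ≡ 0, b₁+d₂+a₃+1 ≡ 0, b₁+b₂+c₃+1 ≡ 0, d₁+b₂+a₃+1 ≡ 0, c₁+d₂+d₃+2 ≡ 0, c₁+b₂+b₃+1 ≡ 0, a₁+b₂+d₃+1 ≡ 0, a₁+d₂+b₃+1 ≡ 0. -/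

import Mathlib

lemma odd_not_modeq_zero {d k : ℤ} (hd : Even d) (hk : Odd k) :
    ¬ (k ≡ 0 [ZMOD d]) := by
  intro h
  have hdvd : d ∣ k := (Int.modEq_zero_iff_dvd).mp h
  have h2 : (2 : ℤ) ∣ k := dvd_trans (even_iff_two_dvd.mp hd) hdvd
  exact (Int.not_even_iff_odd.mpr hk) (even_iff_two_dvd.mpr h2)

lemma indicator_group {p q r s : Prop} [Decidable p] [Decidable q] [Decidable r]
    [Decidable s] (h : ¬ (p ∧ q ∧ r ∧ s)) :
    (if p then (1:ℤ) else 0) + (if q then 1 else 0) + (if r then 1 else 0) +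
      (if s then 1 else 0) ≤ 3 := by
  by_cases hp : p <;> by_cases hq : q <;> by_cases hr : r <;> by_cases hs : s <;>
    simp_all

/-- For even `d ≥ 2`, at most twelve of the sixteen delta-function constraints
of the `(3,4,d)` generic Bell inequality can hold simultaneously. -/
theorem at_most_twelve_of_sixteen_congruences
    (d : ℤ) (hd_even : Even d) (hd : 2 ≤ d)
    (a₁ a₂ a₃ b₁ b₂ b₃ c₁ c₂ c₃ d₁ d₂ d₃ : ℤ) :
    (if a₁ + a₂ + a₃ ≡ 0 [ZMOD d] then 1 else 0) +
    (if c₁ + a₂ + c₃ + 1 ≡ 0 [ZMOD d] then 1 else 0) +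
    (if c₁ + c₂ + a₃ + 1 ≡ 0 [ZMOD d] then 1 else 0) +
    (if a₁ + c₂ + c₃ + 1 ≡ 0 [ZMOD d] then 1 else 0) +
    (if d₁ + a₂ + b₃ + 1 ≡ 0 [ZMOD d] then 1 else 0) +
    (if d₁ + c₂ + d₃ + 2 ≡ 0 [ZMOD d] then 1 else 0) +
    (if b₁ + c₂ + b₃ + 1 ≡ 0 [ZMOD d] then 1 else 0) +
    (if b₁ + a₂ + d₃ + 1 ≡ 0 [ZMOD d] then 1 else 0) +
    (if d₁ + d₂ + c₃ + 2 ≡ 0 [ZMOD d] then 1 else 0) +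
    (if b₁ + d₂ + a₃ + 1 ≡ 0 [ZMOD d] then 1 else 0) +
    (if b₁ + b₂ + c₃ + 1 ≡ 0 [ZMOD d] then 1 else 0) +
    (if d₁ + b₂ + a₃ + 1 ≡ 0 [ZMOD d] then 1 else 0) +
    (if c₁ + d₂ + d₃ + 2 ≡ 0 [ZMOD d] then 1 else 0) +
    (if c₁ + b₂ + b₃ + 1 ≡ 0 [ZMOD d] then 1 else 0) +
    (if a₁ + b₂ + d₃ + 1 ≡ 0 [ZMOD d] then 1 else 0) +
    (if a₁ + d₂ + b₃ + 1 ≡ 0 [ZMOD d] then 1 else 0) ≤ 12 := by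
  have key : ∀ x y z w : ℤ, Odd (x + y + z + w) →
      ¬ (x ≡ 0 [ZMOD d] ∧ y ≡ 0 [ZMOD d] ∧ z ≡ 0 [ZMOD d] ∧ w ≡ 0 [ZMOD d]) := by
    rintro x y z w hodd ⟨h1, h2, h3, h4⟩
    exact odd_not_modeq_zero hd_even hodd
      (by simpa using ((h1.add h2).add h3).add h4)
  have g1 := indicator_group (key (a₁ + a₂ + a₃) (c₁ + a₂ + c₃ + 1)
    (c₁ + c₂ + a₃ + 1) (a₁ + c₂ + c₃ + 1) ⟨a₁ + c₁ + a₂ + c₂ + a₃ + c₃ + 1, by ring⟩)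
  have g2 := indicator_group (key (d₁ + a₂ + b₃ + 1) (d₁ + c₂ + d₃ + 2)
    (b₁ + c₂ + b₃ + 1) (b₁ + a₂ + d₃ + 1) ⟨d₁ + b₁ + a₂ + c₂ + b₃ + d₃ + 2, by ring⟩)
  have g3 := indicator_group (key (d₁ + d₂ + c₃ + 2) (b₁ + d₂ + a₃ + 1)
    (b₁ + b₂ + c₃ + 1) (d₁ + b₂ + a₃ + 1) ⟨d₁ + b₁ + d₂ + b₂ + c₃ + a₃ + 2, by ring⟩)
  have g4 := indicator_group (key (c₁ + d₂ + d₃ + 2) (c₁ + b₂ + b₃ + 1)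
    (a₁ + b₂ + d₃ + 1) (a₁ + d₂ + b₃ + 1) ⟨c₁ + a₁ + d₂ + b₂ + d₃ + b₃ + 2, by ring⟩)
  linarith
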